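/- In any pure Nash equilibrium θ† of a test-time compute game with perfectly rational users, the dominant provider (the one with the highest achievable value V*_1) has full market share: s_1(V_1(θ†_1); V_{−1}(θ†_{−1})) = 1, i.e., V_1(θ†_1) > V_j(θ†_j) for all j ≠ 1. -/
import Mathlib


open scoped Classical

/-- Utility of provider `i` in the test-time compute game with perfectly rational users:
the provider obtains full market share (share `1`) iff their offered value
`V_i(θ_i) = q_i(θ_i) − p_i(θ_i)` strictly exceeds the value offered by every other provider
and the abstention value `V₀`; the utility is the share times the profit
`p_i(θ_i) − c_i(θ_i)`. -/
noncomputable def perfectU (N : ℕ) (Θ : Type*) (p c q : Fin N → Θ → ℝ) (V₀ : ℝ)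
    (i : Fin N) (θv : Fin N → Θ) : ℝ :=
  (if (∀ j, j ≠ i → q j (θv j) - p j (θv j) < q i (θv i) - p i (θv i)) ∧
      V₀ < q i (θv i) - p i (θv i) then (1 : ℝ) else 0) * (p i (θv i) - c i (θv i))

/-- **The dominant provider captures the whole market at equilibrium.** In any pure Nash
equilibrium `θ†` of a test-time compute game with perfectly rational users, the dominant
provider (indexed `0`, having the strictly highest achievable value) offers a value strictly
higher than every other provider, i.e., has full market share. -/
theorem dominant_provider_full_share (N : ℕ) (Θ : Type*) [Fintype Θ] [Nonempty Θ]
    [LinearOrder Θ] (p c q : Fin N → Θ → ℝ) (V₀ : ℝ)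
    (hN : 2 ≤ N)
    (hties : ∀ (i j : Fin N) (t t' : Θ), i ≠ j →
      q i t - p i t ≠ q j t' - p j t')
    (hprofit : ∀ (i : Fin N) (t : Θ), 0 < p i t - c i t)
    (hmono : ∀ i : Fin N, StrictMono (fun t => p i t - c i t))
    (hV₀ : ∀ (i : Fin N) (t : Θ), V₀ < q i t - p i t)
    (hdom : ∀ i : Fin N, i ≠ ⟨0, by omega⟩ → ∃ t₀ : Θ, ∀ t : Θ,
      q i t - p i t < q (⟨0, by omega⟩ : Fin N) t₀ - p (⟨0, by omega⟩ : Fin N) t₀)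
    (θd : Fin N → Θ)
    (hNE : ∀ (i : Fin N) (t' : Θ),
      perfectU N Θ p c q V₀ i (Function.update θd i t') ≤ perfectU N Θ p c q V₀ i θd) :
    ∀ j : Fin N, j ≠ ⟨0, by omega⟩ →
      q j (θd j) - p j (θd j) <
        q (⟨0, by omega⟩ : Fin N) (θd ⟨0, by omega⟩) -
          p (⟨0, by omega⟩ : Fin N) (θd ⟨0, by omega⟩) := by
  intro j hj
  by_contra hlt
  push_neg at hlt
  set i0 : Fin N := ⟨0, by omega⟩ with hi0
  obtain ⟨ts, -, hts⟩ := Finset.exists_max_image Finset.univ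
    (fun t => q i0 t - p i0 t) ⟨Classical.arbitrary Θ, Finset.mem_univ _⟩
  have key : ∀ i : Fin N, i ≠ i0 → ∀ t : Θ,
      q i t - p i t < q i0 ts - p i0 ts := by
    intro i hi t
    obtain ⟨t0, ht0⟩ := hdom i hi
    exact lt_of_lt_of_le (ht0 t) (hts t0 (Finset.mem_univ _))
  have hdev := hNE i0 ts
  have hLHS : perfectU N Θ p c q V₀ i0 (Function.update θd i0 ts)
      = p i0 ts - c i0 ts := by
    unfold perfectU
    rw [Function.update_self]
    rw [if_pos]
    · ring
    constructor
    · intro k hk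
      rw [Function.update_of_ne hk]
      exact key k hk (θd k)
    · exact hV₀ i0 ts
  have hRHS : perfectU N Θ p c q V₀ i0 θd = 0 := by
    unfold perfectU
    rw [if_neg, zero_mul]
    intro ⟨h1, _⟩
    exact absurd (h1 j hj) (not_lt.mpr hlt)
  rw [hLHS, hRHS] at hdev
  exact absurd hdev (not_le.mpr (hprofit i0 ts))
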